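/- Let O be a profile of partitioned preferences on C, r the k-approval rule, and c ∈ C. Then c is a possible co-winner if and only if there exists a profile V^c of linear extensions of O^c (where c is fixed at the top of its block in each vote) such that every candidate c' ≠ c receives score 0 in at least s^max(O,c') − s^max(O,c) of the votes o_i in which s^max(o_i,c') = 1. -/

import Mathlib

open Finset

/-- card of an initial segment subtype of `Fin m`. -/
lemma card_lt_subtype {m : ℕ} (i : Fin m) : Fintype.card {j : Fin m // j < i} = (i : ℕ) := by
  rw [Fintype.card_subtype]
  have : univ.filter (fun j : Fin m => j < i) = Finset.Iio i := by
    ext j; simp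
  rw [this, Fin.card_Iio]

/-- Position comparison between two equivs. -/
lemma pos_le {C : Type*} [Fintype C] (v w : C ≃ Fin (Fintype.card C)) (x : C)
    (h : ∀ b, v b < v x → w b < w x) : (v x : ℕ) ≤ (w x : ℕ) := by
  have hinj : Function.Injective
      (fun j : {j : Fin (Fintype.card C) // j < v x} =>
        (⟨w (v.symm j.1), h _ (by simpa using j.2)⟩ : {j : Fin (Fintype.card C) // j < w x})) := by
    intro a b hab
    simpa [Subtype.ext_iff] using hab
  have := Fintype.card_le_of_injective _ hinj
  rwa [card_lt_subtype, card_lt_subtype] at this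

lemma card_indicator {n : ℕ} (P : Fin n → Prop) [DecidablePred P] :
    (Nat.card {i : Fin n // P i} : ℤ) = ∑ i, (if P i then (1:ℤ) else 0) := by
  rw [Nat.card_eq_fintype_card, Fintype.card_subtype, Finset.card_filter]
  push_cast
  refine Finset.sum_congr rfl (fun i _ => ?_)
  by_cases h : P i <;> simp [h]

/-- sort an injective key into an order-respecting equiv -/
lemma exists_mono_equiv {C β : Type*} [Fintype C] [LinearOrder β] (f : C → β)
    (inj : Function.Injective f) :
    ∃ e : C ≃ Fin (Fintype.card C), ∀ a b, f a < f b → e a < e b := by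
  letI L : LinearOrder C := LinearOrder.lift' f inj
  refine ⟨(monoEquivOfFin C rfl).symm.toEquiv, fun a b h => ?_⟩
  have hab : a < b := by
    rw [lt_iff_le_not_ge]
    exact ⟨h.le, not_le.2 h⟩
  exact (monoEquivOfFin C rfl).symm.lt_iff_lt.mpr hab

theorem stmt7 {C : Type*} [Fintype C] [DecidableEq C] (n k : ℕ)
    (B : Fin n → C → ℕ) (c : C) (smax : Fin n → C → ℤ)
    (hsmax : ∀ i (a : C), IsGreatest
      {s : ℤ | ∃ v : C ≃ Fin (Fintype.card C),
        (∀ x y : C, B i x < B i y → v x < v y) ∧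
        s = if (v a : ℕ) < k then 1 else 0} (smax i a)) :
    (∃ V : Fin n → (C ≃ Fin (Fintype.card C)),
        (∀ i (a b : C), B i a < B i b → V i a < V i b) ∧
        ∀ c' : C, (∑ i, if (V i c' : ℕ) < k then (1:ℤ) else 0)
            ≤ ∑ i, if (V i c : ℕ) < k then (1:ℤ) else 0) ↔
    (∃ V : Fin n → (C ≃ Fin (Fintype.card C)),
        (∀ i (a b : C), (B i a < B i b ∨ (a = c ∧ b ≠ c ∧ ¬ B i b < B i c)) →
          V i a < V i b) ∧
        ∀ c' : C, c' ≠ c →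
          (∑ i, smax i c') - (∑ i, smax i c) ≤
            (Nat.card {i : Fin n // smax i c' = 1 ∧
              (if (V i c' : ℕ) < k then (1:ℤ) else 0) = 0} : ℤ)) := by
  classical
  -- basic facts about smax
  have hsmem : ∀ i a, smax i a = 0 ∨ smax i a = 1 := by
    intro i a
    obtain ⟨v, -, hv⟩ := (hsmax i a).1
    by_cases h : (v a : ℕ) < k
    · right; simp [hv, h]
    · left; simp [hv, h]
  have hle : ∀ i a (v : C ≃ Fin (Fintype.card C)),
      (∀ x y : C, B i x < B i y → v x < v y) →
      (if (v a : ℕ) < k then (1:ℤ) else 0) ≤ smax i a := by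
    intro i a v hv
    exact (hsmax i a).2 ⟨v, hv, rfl⟩
  -- if c is atop its block in v, then v achieves smax for c
  have htop : ∀ i (v : C ≃ Fin (Fintype.card C)),
      (∀ x y : C, B i x < B i y → v x < v y) →
      (∀ b : C, b ≠ c → ¬ B i b < B i c → v c < v b) →
      smax i c = (if (v c : ℕ) < k then (1:ℤ) else 0) := by
    intro i v hv hc
    refine le_antisymm ?_ (hle i c v hv)
    obtain ⟨w, hw, hweq⟩ := (hsmax i c).1
    rw [hweq]
    have hpos : (v c : ℕ) ≤ (w c : ℕ) := by
      refine pos_le v w c (fun b hb => ?_)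
      have hbne : b ≠ c := by rintro rfl; exact lt_irrefl _ hb
      have hBb : B i b < B i c := by
        by_contra hn
        exact absurd (hc b hbne hn) (asymm hb)
      exact hw b c hBb
    by_cases h : (w c : ℕ) < k
    · have : (v c : ℕ) < k := lt_of_le_of_lt hpos h
      simp [h, this]
    · simp only [h, if_false]
      split <;> norm_num
  -- counting identity: for any extension profile V, the Nat.card equals ∑ (smax - score)
  have hcount : ∀ (V : Fin n → (C ≃ Fin (Fintype.card C))) (c' : C),
      (Nat.card {i : Fin n // smax i c' = 1 ∧
          (if (V i c' : ℕ) < k then (1:ℤ) else 0) = 0} : ℤ)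
        = ∑ i, (if (smax i c' = 1 ∧ (if (V i c' : ℕ) < k then (1:ℤ) else 0) = 0)
            then (1:ℤ) else 0) := by
    intro V c'
    exact card_indicator _
  have hterm : ∀ (V : Fin n → (C ≃ Fin (Fintype.card C))) (c' : C) i,
      (if (V i c' : ℕ) < k then (1:ℤ) else 0) ≤ smax i c' →
      (if (smax i c' = 1 ∧ (if (V i c' : ℕ) < k then (1:ℤ) else 0) = 0)
          then (1:ℤ) else 0) = smax i c' - (if (V i c' : ℕ) < k then (1:ℤ) else 0) := by
    intro V c' i hle'
    by_cases h : (V i c' : ℕ) < k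
    · rw [if_pos h] at hle' ⊢
      rcases hsmem i c' with h0 | h1
      · rw [h0] at hle'; exact absurd hle' (by norm_num)
      · rw [h1]; norm_num
    · rw [if_neg h] at hle' ⊢
      rcases hsmem i c' with h0 | h1
      · rw [h0]; norm_num
      · rw [h1]; norm_num
  constructor
  · -- forward: from a co-winner witness, build the O^c witness
    rintro ⟨V, hV, hwin⟩
    -- key for sorting: block, then c-first, then old position
    set κ : Fin n → C → ℕ ×ₗ (ℕ ×ₗ Fin (Fintype.card C)) :=
      fun i a => toLex (B i a, toLex ((if a = c then 0 else 1), V i a)) with hκ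
    have hκinj : ∀ i, Function.Injective (κ i) := by
      intro i a b hab
      simp only [hκ, toLex_inj, Prod.mk.injEq] at hab
      exact (V i).injective hab.2.2
    have hκlt : ∀ i a b, κ i a < κ i b ↔
        (B i a < B i b ∨ (B i a = B i b ∧
          ((if a = c then (0:ℕ) else 1) < (if b = c then 0 else 1) ∨
           ((if a = c then (0:ℕ) else 1) = (if b = c then 0 else 1) ∧ V i a < V i b)))) := by
      intro i a b
      rw [hκ]
      simp only [Prod.Lex.lt_iff, ofLex_toLex]
    choose W hW using fun i => exists_mono_equiv (κ i) (hκinj i)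
    refine ⟨W, ?_, ?_⟩
    · rintro i a b (hab | ⟨rfl, hbc, hBb⟩)
      · exact hW i a b ((hκlt i a b).2 (Or.inl hab))
      · refine hW i _ b ((hκlt i _ b).2 ?_)
        rcases lt_or_eq_of_le (not_lt.mp hBb) with h | h
        · exact Or.inl h
        · exact Or.inr ⟨h, Or.inl (by simp [hbc])⟩
    · intro c' hc'
      -- W satisfies the block constraints
      have hWext : ∀ i (a b : C), B i a < B i b → W i a < W i b :=
        fun i a b h => hW i a b ((hκlt i a b).2 (Or.inl h))
      -- scores only drop for c' ≠ c
      have hdrop : ∀ i, (if (W i c' : ℕ) < k then (1:ℤ) else 0)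
          ≤ (if (V i c' : ℕ) < k then (1:ℤ) else 0) := by
        intro i
        have hmono : (V i c' : ℕ) ≤ (W i c' : ℕ) := by
          refine pos_le (V i) (W i) c' (fun b hb => ?_)
          refine hW i b c' ((hκlt i b c').2 ?_)
          have hbne : b ≠ c' := by rintro rfl; exact lt_irrefl _ hb
          have hB : ¬ B i c' < B i b := fun h => absurd (hV i c' b h) (asymm hb)
          rcases lt_or_eq_of_le (not_lt.mp hB) with h | h
          · exact Or.inl h
          · refine Or.inr ⟨h, ?_⟩
            by_cases hbc : b = c
            · exact Or.inl (by simp [hbc, hc'])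
            · exact Or.inr ⟨by simp [hbc, hc'], hb⟩
        by_cases h : (W i c' : ℕ) < k
        · simp [h, lt_of_le_of_lt hmono h]
        · rw [if_neg h]; split <;> norm_num
      rw [hcount W c']
      calc (∑ i, smax i c') - (∑ i, smax i c)
          ≤ (∑ i, smax i c') - ∑ i, (if (V i c : ℕ) < k then (1:ℤ) else 0) :=
            sub_le_sub_left (Finset.sum_le_sum (fun i _ => hle i c (V i) (hV i))) _
          _ ≤ (∑ i, smax i c') - ∑ i, (if (V i c' : ℕ) < k then (1:ℤ) else 0) :=
            sub_le_sub_left (hwin c') _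
          _ ≤ (∑ i, smax i c') - ∑ i, (if (W i c' : ℕ) < k then (1:ℤ) else 0) :=
            sub_le_sub_left (Finset.sum_le_sum (fun i _ => hdrop i)) _
          _ = ∑ i, (smax i c' - (if (W i c' : ℕ) < k then (1:ℤ) else 0)) := by
            rw [Finset.sum_sub_distrib]
          _ = ∑ i, (if (smax i c' = 1 ∧ (if (W i c' : ℕ) < k then (1:ℤ) else 0) = 0)
              then (1:ℤ) else 0) := by
            refine Finset.sum_congr rfl (fun i _ => ?_)
            exact (hterm W c' i (hle i c' (W i) (hWext i))).symm
  · -- backward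
    rintro ⟨V, hV, hcnt⟩
    have hVext : ∀ i (x y : C), B i x < B i y → V i x < V i y :=
      fun i x y h => hV i x y (Or.inl h)
    refine ⟨V, hVext, fun c' => ?_⟩
    by_cases hc' : c' = c
    · subst hc'; exact le_refl _
    · have hc : ∀ i, smax i c = (if (V i c : ℕ) < k then (1:ℤ) else 0) := by
        intro i
        exact htop i (V i) (hVext i) (fun b hb hB => hV i c b (Or.inr ⟨rfl, hb, hB⟩))
      have h1 : ∑ i, (if (V i c' : ℕ) < k then (1:ℤ) else 0)
          = (∑ i, smax i c') - (Nat.card {i : Fin n // smax i c' = 1 ∧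
              (if (V i c' : ℕ) < k then (1:ℤ) else 0) = 0} : ℤ) := by
        rw [hcount V c']
        rw [eq_sub_iff_add_eq, ← Finset.sum_add_distrib]
        refine Finset.sum_congr rfl (fun i _ => ?_)
        rw [hterm V c' i (hle i c' (V i) (hVext i))]
        ring
      rw [h1]
      have h2 := hcnt c' hc'
      have h3 : ∑ i, smax i c = ∑ i, (if (V i c : ℕ) < k then (1:ℤ) else 0) :=
        Finset.sum_congr rfl (fun i _ => hc i)
      linarith
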